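/- arXiv:2007.01209 — 4 statements merged into one kernel-verified Lean document; each statement's English description precedes it below -/
import Mathlib

section
/- Let k be a positive integer, let x, y, z be integers with x^3 + y^3 + z^3 = k, |x| > |y| > |z|, and |z| > √k. Then 0 < |x + y| < (2^(1/3) - 1)·|z|. -/
lemma cube_root_bounds : (1:ℝ) < (2:ℝ)^((1:ℝ)/3) ∧ (2:ℝ)^((1:ℝ)/3) < 3/2 := by
  have hβ3 : ((2:ℝ)^((1:ℝ)/3))^3 = 2 := by
    rw [← Real.rpow_natCast ((2:ℝ)^((1:ℝ)/3)) 3, ← Real.rpow_mul (by norm_num)]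
    norm_num
  have hβ0 : (0:ℝ) < (2:ℝ)^((1:ℝ)/3) := Real.rpow_pos_of_pos (by norm_num) _
  constructor <;> nlinarith [sq_nonneg ((2:ℝ)^((1:ℝ)/3) - 1), sq_nonneg ((2:ℝ)^((1:ℝ)/3) + 1), sq_nonneg ((2:ℝ)^((1:ℝ)/3))]

lemma real_key (c d : ℝ) (hc : 2 ≤ c) (hd : 1 ≤ d)
    (h : 3*(c+1)^2*d + 3*(c+1)*d^2 + d^3 < c^3 + c^2) :
    d < ((2:ℝ)^((1:ℝ)/3) - 1) * c := by
  set β := (2:ℝ)^((1:ℝ)/3) with hβ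
  have hβ3 : β^3 = 2 := by
    rw [hβ, ← Real.rpow_natCast ((2:ℝ)^((1:ℝ)/3)) 3, ← Real.rpow_mul (by norm_num)]
    norm_num
  obtain ⟨hβ1, hβ2⟩ := cube_root_bounds
  rw [← hβ] at hβ1 hβ2
  by_contra hcon
  push_neg at hcon
  have hβsq : 4/3 < β^2 := by nlinarith
  have h1 : β*c + 1 ≤ c + 1 + d := by nlinarith
  have h2 : (β*c+1)^3 ≤ (c+1+d)^3 :=
    pow_le_pow_left₀ (by nlinarith) h1 3
  have e1 : (β*c+1)^3 = 2*c^3 + 3*β^2*c^2 + 3*β*c + 1 := by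
    rw [show (β*c+1)^3 = β^3*c^3 + 3*β^2*c^2 + 3*β*c + 1 from by ring, hβ3]
  have e2 : (c+1+d)^3 = (c+1)^3 + 3*(c+1)^2*d + 3*(c+1)*d^2 + d^3 := by ring
  have p1 : 4/3*c^2 < β^2*c^2 := by nlinarith [mul_pos (show (0:ℝ) < c by linarith) (show (0:ℝ) < c by linarith)]
  have p2 : c < β*c := by nlinarith
  nlinarith [h2]

theorem d_lt_alpha_z (k : ℤ) (hk : 0 < k) (x y z : ℤ)
    (h : x ^ 3 + y ^ 3 + z ^ 3 = k)
    (hxy : |x| > |y|) (hyz : |y| > |z|)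
    (hz : Real.sqrt k < |(z : ℝ)|) :
    0 < |x + y| ∧ (|x + y| : ℝ) < ((2 : ℝ) ^ ((1 : ℝ) / 3) - 1) * |(z : ℝ)| := by
  have hzr : ((|z| : ℤ) : ℝ) = |(z:ℝ)| := by push_cast; ring
  have hk2 : k < z^2 := by
    have h0 : (0:ℝ) ≤ (k:ℝ) := by exact_mod_cast hk.le
    have h1 : Real.sqrt k ^ 2 < |(z:ℝ)|^2 := by
      apply pow_lt_pow_left₀ hz (Real.sqrt_nonneg _) (by norm_num)
    rw [Real.sq_sqrt h0, sq_abs] at h1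
    exact_mod_cast h1
  have hc2 : 2 ≤ |z| := by
    by_contra hcon
    push_neg at hcon
    nlinarith [sq_abs z, abs_nonneg z]
  have hb : |z| + 1 ≤ |y| := Int.add_one_le_iff.mpr hyz
  have ha : |y| + 1 ≤ |x| := Int.add_one_le_iff.mpr hxy
  have hxy3 : x^3 + y^3 = k - z^3 := by linarith
  have hbound : |x^3+y^3| < |z|^3 + |z|^2 ∧ x^3+y^3 ≠ 0 := by
    rcases le_or_gt 0 z with hz0 | hz0
    · have hzz : |z| = z := abs_of_nonneg hz0
      have hz3' : |z|^3 = z^3 := by rw [hzz]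
      have hz2' : |z|^2 = z^2 := by rw [hzz]
      have hz2 : 2 ≤ z := by linarith [hzz ▸ hc2]
      have hq : 2*z^2 ≤ z*z^2 := mul_le_mul_of_nonneg_right hz2 (sq_nonneg z)
      have hkz3 : k < z^3 := by nlinarith
      constructor
      · rw [hxy3, abs_of_neg (by linarith)]
        linarith
      · rw [hxy3]; intro hh; omega
    · have hzz : |z| = -z := abs_of_neg hz0
      have hz3' : |z|^3 = -z^3 := by rw [hzz]; ring
      have hz2' : |z|^2 = z^2 := by rw [hzz]; ring
      constructor
      · rw [hxy3, abs_of_pos (by nlinarith)]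
        linarith
      · rw [hxy3]; intro hh; nlinarith
  have hmain : |x+y| = |x| - |y| ∧ |x|^3 - |y|^3 = |x^3 + y^3| := by
    set c := |z| with hc
    rcases le_or_gt 0 x with hx0 | hx0 <;> rcases le_or_gt 0 y with hy0 | hy0
    · exfalso
      have h1 : |x| = x := abs_of_nonneg hx0
      have h2 : |y| = y := abs_of_nonneg hy0
      have hyc : c + 1 ≤ y := by rw [← h2]; exact hb
      have hxc : c + 2 ≤ x := by rw [← h2] at hyc; omega
      have q1 : (c+2)^3 ≤ x^3 := pow_le_pow_left₀ (by linarith) hxc 3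
      have q2 : (c+1)^3 ≤ y^3 := pow_le_pow_left₀ (by linarith) hyc 3
      have h3 : |x^3+y^3| = x^3+y^3 := abs_of_nonneg (by nlinarith)
      nlinarith [hbound.1, sq_nonneg c]
    · have h1 : |x| = x := abs_of_nonneg hx0
      have h2 : |y| = -y := abs_of_neg hy0
      have h4 : 0 < x + y := by omega
      have q : (-y)^3 < x^3 := pow_lt_pow_left₀ (by omega) (by linarith) (by norm_num)
      have h5 : 0 < x^3 + y^3 := by nlinarith
      rw [abs_of_pos h4, abs_of_pos h5]
      exact ⟨by omega, by rw [h1, h2]; ring⟩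
    · have h1 : |x| = -x := abs_of_neg hx0
      have h2 : |y| = y := abs_of_nonneg hy0
      have h4 : x + y < 0 := by omega
      have q : y^3 < (-x)^3 := pow_lt_pow_left₀ (by omega) (by linarith) (by norm_num)
      have h5 : x^3 + y^3 < 0 := by nlinarith
      rw [abs_of_neg h4, abs_of_neg h5]
      exact ⟨by omega, by rw [h1, h2]; ring⟩
    · exfalso
      have h1 : |x| = -x := abs_of_neg hx0
      have h2 : |y| = -y := abs_of_neg hy0
      have hyc : c + 1 ≤ -y := by rw [← h2]; exact hb
      have hxc : c + 2 ≤ -x := by omega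
      have q1 : (c+2)^3 ≤ (-x)^3 := pow_le_pow_left₀ (by linarith) hxc 3
      have q2 : (c+1)^3 ≤ (-y)^3 := pow_le_pow_left₀ (by linarith) hyc 3
      have h3 : |x^3+y^3| = -(x^3+y^3) := abs_of_neg (by nlinarith)
      nlinarith [hbound.1, sq_nonneg c]
  have hne : x + y ≠ 0 := by
    intro hh
    apply hbound.2
    have : y = -x := by omega
    rw [this]; ring
  have hdpos : 0 < |x+y| := abs_pos.mpr hne
  have hd1 : 1 ≤ |x+y| := hdpos
  refine ⟨hdpos, ?_⟩
  set c := |z| with hc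
  set d := |x+y| with hdd
  have hkey : 3*(c+1)^2*d + 3*(c+1)*d^2 + d^3 < c^3 + c^2 := by
    have e1 : |x| = |y| + d := by omega
    have e2 : |x|^3 - |y|^3 < c^3 + c^2 := by
      rw [hmain.2]; exact hbound.1
    rw [e1] at e2
    have hb1 : 0 ≤ |y| - (c+1) := by linarith
    have hd0 : (0:ℤ) ≤ d := by omega
    nlinarith [e2, mul_nonneg (mul_nonneg hb1 hd0) (show (0:ℤ) ≤ |y| + (c+1) by linarith),
      mul_nonneg hb1 (mul_nonneg hd0 hd0)]
  have hkeyR : 3*((c:ℝ)+1)^2*(d:ℝ) + 3*((c:ℝ)+1)*(d:ℝ)^2 + (d:ℝ)^3 < (c:ℝ)^3 + (c:ℝ)^2 := by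
    exact_mod_cast hkey
  have hres := real_key (c:ℝ) (d:ℝ) (by exact_mod_cast hc2) (by exact_mod_cast hd1) hkeyR
  have hcast : ((d:ℤ):ℝ) = |(x:ℝ) + (y:ℝ)| := by rw [hdd]; push_cast; ring
  rw [← hzr]
  calc |(x:ℝ) + (y:ℝ)| = ((d:ℤ):ℝ) := hcast.symm
    _ < _ := hres
end

section
/- The improper integral ∫_1^∞ (t^3 + 1)^(-2/3) dt converges and equals (1/6)·Γ(1/3)^2 / Γ(2/3). -/
open MeasureTheory Real Set

noncomputable def gbeta : ℝ → ℝ := fun u => u ^ (-(2:ℝ)/3) * (1-u) ^ (-(2:ℝ)/3)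



lemma beta_val : ∫ x in (0:ℝ)..1, gbeta x = Real.Gamma (1/3) ^ 2 / Real.Gamma (2/3) := by
  have h := Complex.Gamma_mul_Gamma_eq_betaIntegral (s := 1/3) (t := 1/3) (by norm_num) (by norm_num)
  have h13 : ((1:ℂ)/3 + 1/3) = ((2/3 : ℝ) : ℂ) := by norm_num
  have hbeta : Complex.betaIntegral (1/3) (1/3) = ((∫ x in (0:ℝ)..1, gbeta x : ℝ) : ℂ) := by
    rw [Complex.betaIntegral, ← intervalIntegral.integral_ofReal]
    refine intervalIntegral.integral_congr fun x hx => ?_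
    rw [Set.uIcc_of_le (by norm_num : (0:ℝ) ≤ 1)] at hx
    obtain ⟨hx0, hx1⟩ := hx
    have h1x : (0:ℝ) ≤ 1 - x := by linarith
    have he : ((1:ℂ)/3 - 1) = ((-(2:ℝ)/3 : ℝ) : ℂ) := by norm_num
    simp only [gbeta, he]
    have hc : ((1:ℂ) - (x:ℝ)) = ((1 - x : ℝ) : ℂ) := by push_cast; ring
    rw [hc, ← Complex.ofReal_cpow hx0, ← Complex.ofReal_cpow h1x]
    push_cast
    ring
  rw [hbeta, h13, Complex.Gamma_ofReal] at h
  have h13' : ((1:ℂ)/3) = ((1/3 : ℝ) : ℂ) := by norm_num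
  rw [h13', Complex.Gamma_ofReal] at h
  have h2 : Real.Gamma (1/3) * Real.Gamma (1/3) = Real.Gamma (2/3) * ∫ x in (0:ℝ)..1, gbeta x := by
    exact_mod_cast h
  have hpos : 0 < Real.Gamma (2/3) := Real.Gamma_pos_of_pos (by norm_num)
  rw [pow_two, h2, mul_div_cancel_left₀ _ hpos.ne']


lemma gbeta_contOn : ContinuousOn gbeta (Set.Ioo 0 1) := by
  intro u hu
  obtain ⟨h0, h1⟩ := hu
  apply ContinuousWithinAt.mul
  · exact (Real.continuousAt_rpow_const u _ (Or.inl h0.ne')).continuousWithinAt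
  · exact ((Real.continuousAt_rpow_const (1-u) _ (Or.inl (by intro h; linarith [sub_eq_zero.mp h]))).comp
      (by fun_prop)).continuousWithinAt

lemma gbeta_int_left : IntegrableOn gbeta (Set.Ioo 0 (1/2)) := by
  have hint : IntegrableOn (fun u : ℝ => 2 * u ^ (-(2:ℝ)/3)) (Set.Ioo 0 (1/2)) := by
    have := (intervalIntegral.intervalIntegrable_rpow' (a := 0) (b := 1/2)
      (r := -(2:ℝ)/3) (by norm_num))
    rw [intervalIntegrable_iff_integrableOn_Ioc_of_le (by norm_num)] at this
    exact IntegrableOn.mono_set (this.const_mul 2) Set.Ioo_subset_Ioc_self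
  refine Integrable.mono' hint
    ((gbeta_contOn.mono (fun x hx => ⟨hx.1, lt_of_lt_of_le hx.2 (by norm_num)⟩)).aestronglyMeasurable
      measurableSet_Ioo) ?_
  filter_upwards [ae_restrict_mem measurableSet_Ioo] with u hu
  obtain ⟨hu0, hu1⟩ := hu
  have h1u : (1:ℝ)/2 ≤ 1 - u := by linarith
  have hg0 : 0 ≤ gbeta u := mul_nonneg (rpow_nonneg hu0.le _) (rpow_nonneg (by linarith) _)
  rw [Real.norm_of_nonneg hg0]
  show u ^ (-(2:ℝ)/3) * (1-u) ^ (-(2:ℝ)/3) ≤ _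
  have hb : (1 - u) ^ (-(2:ℝ)/3) ≤ ((1:ℝ)/2) ^ (-(2:ℝ)/3) :=
    Real.rpow_le_rpow_of_nonpos (by norm_num) h1u (by norm_num)
  have hb2 : ((1:ℝ)/2) ^ (-(2:ℝ)/3) ≤ 2 := by
    rw [show ((1:ℝ)/2) = 2⁻¹ by norm_num, Real.inv_rpow (by norm_num),
      ← Real.rpow_neg (by norm_num)]
    calc (2:ℝ) ^ (-(-(2:ℝ)/3)) ≤ 2 ^ (1:ℝ) :=
          Real.rpow_le_rpow_of_exponent_le (by norm_num) (by norm_num)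
    _ = 2 := Real.rpow_one 2
  calc u ^ (-(2:ℝ)/3) * (1-u) ^ (-(2:ℝ)/3) ≤ u ^ (-(2:ℝ)/3) * 2 :=
        mul_le_mul_of_nonneg_left (hb.trans hb2) (rpow_nonneg hu0.le _)
  _ = 2 * u ^ (-(2:ℝ)/3) := by ring

lemma gbeta_symm (u : ℝ) : gbeta (1 - u) = gbeta u := by
  unfold gbeta; rw [sub_sub_cancel]; ring

lemma refl_img : (fun u : ℝ => 1 - u) '' Set.Ioo 0 (1/2) = Set.Ioo (1/2) 1 := by
  rw [Set.image_const_sub_Ioo]; norm_num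

lemma refl_deriv : ∀ u ∈ Set.Ioo (0:ℝ) (1/2),
    HasDerivWithinAt (fun u : ℝ => 1 - u) (-1) (Set.Ioo 0 (1/2)) u :=
  fun u _ => ((hasDerivAt_id u).const_sub 1).hasDerivWithinAt

lemma refl_inj : Set.InjOn (fun u : ℝ => 1 - u) (Set.Ioo 0 (1/2)) :=
  fun a _ b _ h => by dsimp at h; linarith

lemma gbeta_int_right : IntegrableOn gbeta (Set.Ioo (1/2) 1) := by
  rw [← refl_img, integrableOn_image_iff_integrableOn_abs_deriv_smul measurableSet_Ioo
    refl_deriv refl_inj]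
  simpa [gbeta_symm] using gbeta_int_left

lemma gbeta_right_eq : ∫ u in Set.Ioo (1/2:ℝ) 1, gbeta u = ∫ u in Set.Ioo (0:ℝ) (1/2), gbeta u := by
  rw [← refl_img, integral_image_eq_integral_abs_deriv_smul measurableSet_Ioo refl_deriv refl_inj]
  simp [gbeta_symm]


noncomputable def cvf : ℝ → ℝ := fun t => (t^3 + 1)⁻¹
noncomputable def cvf' : ℝ → ℝ := fun t => -(3*t^2) / (t^3+1)^2

lemma cv_deriv : ∀ t ∈ Set.Ioi (1:ℝ), HasDerivWithinAt cvf (cvf' t) (Set.Ioi 1) t := by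
  intro t ht
  have h1 : (0:ℝ) < t := lt_trans one_pos ht
  have hc : (0:ℝ) < t^3 + 1 := by positivity
  have hd : HasDerivAt (fun t : ℝ => t^3 + 1) (3*t^2) t := by
    have := (hasDerivAt_pow 3 t).add_const 1
    norm_num at this ⊢
    exact this
  exact (hd.inv hc.ne').hasDerivWithinAt

lemma cv_inj : Set.InjOn cvf (Set.Ioi 1) := by
  intro a ha b hb h
  simp only [cvf] at h
  have ha1 : (1:ℝ) < a := ha
  have hb1 : (1:ℝ) < b := hb
  have hab : a^3 = b^3 := by
    have h2 : a^3 + 1 = b^3 + 1 := by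
      have h0a : (0:ℝ) < a^3 + 1 := by positivity
      have h0b : (0:ℝ) < b^3 + 1 := by positivity
      exact inv_injective h
    linarith
  rcases lt_trichotomy a b with h' | h' | h'
  · exact absurd (pow_lt_pow_left₀ h' (by linarith) three_ne_zero) (by rw [hab]; exact lt_irrefl _)
  · exact h'
  · exact absurd (pow_lt_pow_left₀ h' (by linarith) three_ne_zero) (by rw [hab]; exact lt_irrefl _)

lemma cv_img : cvf '' Set.Ioi 1 = Set.Ioo 0 (1/2) := by
  ext u
  constructor
  · rintro ⟨t, ht, rfl⟩
    have ht1 : (1:ℝ) < t := ht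
    have hc : (2:ℝ) < t^3 + 1 := by nlinarith [pow_lt_pow_left₀ ht1 zero_le_one (three_ne_zero)]
    constructor
    · simp only [cvf]; positivity
    · simp only [cvf]
      rw [show (1:ℝ)/2 = 2⁻¹ by norm_num]
      exact inv_strictAnti₀ (by norm_num) hc
  · rintro ⟨hu0, hu1⟩
    have hiu : (2:ℝ) < 1/u := by
      rw [lt_div_iff₀ hu0]; linarith
    set c : ℝ := 1/u - 1 with hcdef
    have hc1 : (1:ℝ) < c := by simp only [hcdef]; linarith
    have hc0 : (0:ℝ) < c := by linarith
    refine ⟨c ^ ((1:ℝ)/3), ?_, ?_⟩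
    · show (1:ℝ) < c ^ ((1:ℝ)/3)
      rw [Real.one_lt_rpow_iff_of_pos hc0]
      left; exact ⟨hc1, by norm_num⟩
    · have hcube : (c ^ ((1:ℝ)/3))^3 = c := by
        rw [← Real.rpow_natCast (c ^ ((1:ℝ)/3)) 3, ← Real.rpow_mul hc0.le]
        norm_num
      simp only [cvf, hcube]
      rw [hcdef, sub_add_cancel, one_div, inv_inv]

lemma cv_pointwise : ∀ t ∈ Set.Ioi (1:ℝ),
    |cvf' t| • gbeta (cvf t) = 3 * (t^3 + 1) ^ (-(2:ℝ)/3) := by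
  intro t ht
  have ht1 : (1:ℝ) < t := ht
  have ht0 : (0:ℝ) < t := by linarith
  set c : ℝ := t^3 + 1 with hcdef
  have hc0 : (0:ℝ) < c := by positivity
  have habs : |cvf' t| = 3*t^2 / c^2 := by
    simp only [cvf', ← hcdef]
    rw [abs_div, abs_neg, abs_of_nonneg (by positivity : (0:ℝ) ≤ 3*t^2),
      abs_of_nonneg (by positivity : (0:ℝ) ≤ c^2)]
  have hsub : 1 - c⁻¹ = t^3 / c := by
    field_simp
    simp [hcdef]
  have e1 : (c⁻¹) ^ (-(2:ℝ)/3) = c ^ ((2:ℝ)/3) := by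
    rw [show (-(2:ℝ)/3) = -((2:ℝ)/3) by ring, Real.inv_rpow hc0.le,
      Real.rpow_neg hc0.le, inv_inv]
  have e2 : (t^3 / c) ^ (-(2:ℝ)/3) = (t^2)⁻¹ * c ^ ((2:ℝ)/3) := by
    rw [Real.div_rpow (by positivity) hc0.le]
    rw [show (-(2:ℝ)/3) = -((2:ℝ)/3) by ring, Real.rpow_neg hc0.le, div_inv_eq_mul]
    congr 1
    rw [← Real.rpow_natCast t 3, ← Real.rpow_mul ht0.le,
      show (((3:ℕ)):ℝ) * -((2:ℝ)/3) = -((2:ℕ):ℝ) by norm_num,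
      Real.rpow_neg ht0.le, Real.rpow_natCast]
  have e3 : c ^ (-(2:ℝ)/3) = (c ^ ((2:ℝ)/3))⁻¹ := by
    rw [show (-(2:ℝ)/3) = -((2:ℝ)/3) by ring, Real.rpow_neg hc0.le]
  have hA0 : (0:ℝ) < c ^ ((2:ℝ)/3) := Real.rpow_pos_of_pos hc0 _
  have hc2 : c^2 = (c ^ ((2:ℝ)/3))^3 := by
    rw [← Real.rpow_natCast (c ^ ((2:ℝ)/3)) 3, ← Real.rpow_mul hc0.le,
      show ((2:ℝ)/3) * ((3:ℕ):ℝ) = ((2:ℕ):ℝ) by norm_num, Real.rpow_natCast]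
  simp only [gbeta, cvf, ← hcdef, smul_eq_mul, habs, hsub, e1, e2, e3, hc2]
  field_simp


lemma gbeta_int_Ioo01 : IntegrableOn gbeta (Set.Ioo 0 1) := by
  have h : IntegrableOn gbeta (Set.Ioc 0 (1/2) ∪ Set.Ioc (1/2) 1) := by
    refine IntegrableOn.union ?_ ?_
    · rw [integrableOn_Ioc_iff_integrableOn_Ioo]; exact gbeta_int_left
    · rw [integrableOn_Ioc_iff_integrableOn_Ioo]; exact gbeta_int_right
  rw [Set.Ioc_union_Ioc_eq_Ioc (by norm_num) (by norm_num)] at h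
  exact h.mono_set Set.Ioo_subset_Ioc_self

lemma gbeta_split : ∫ u in Set.Ioo (0:ℝ) 1, gbeta u = 2 * ∫ u in Set.Ioo (0:ℝ) (1/2), gbeta u := by
  have hd : Disjoint (Set.Ioc (0:ℝ) (1/2)) (Set.Ioc (1/2:ℝ) 1) := Set.Ioc_disjoint_Ioc_of_le le_rfl
  have hu := MeasureTheory.setIntegral_union hd measurableSet_Ioc
    ((integrableOn_Ioc_iff_integrableOn_Ioo).mpr gbeta_int_left)
    ((integrableOn_Ioc_iff_integrableOn_Ioo).mpr gbeta_int_right) (f := gbeta) (μ := volume)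
  rw [Set.Ioc_union_Ioc_eq_Ioc (by norm_num) (by norm_num)] at hu
  rw [← integral_Ioc_eq_integral_Ioo, hu, integral_Ioc_eq_integral_Ioo,
    integral_Ioc_eq_integral_Ioo, gbeta_right_eq]
  ring

open MeasureTheory Real in
theorem sigma_infinity_integral :
    IntegrableOn (fun t : ℝ => (t ^ 3 + 1) ^ (-(2 : ℝ) / 3)) (Set.Ici 1) ∧
    ∫ t in Set.Ici (1 : ℝ), (t ^ 3 + 1) ^ (-(2 : ℝ) / 3) =
      (1 / 6) * Real.Gamma (1 / 3) ^ 2 / Real.Gamma (2 / 3) := by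
  -- change of variables
  have hint3 : IntegrableOn (fun t : ℝ => |cvf' t| • gbeta (cvf t)) (Set.Ioi 1) := by
    rw [← integrableOn_image_iff_integrableOn_abs_deriv_smul measurableSet_Ioi cv_deriv cv_inj]
    rw [cv_img]
    exact gbeta_int_left
  have hintIoi : IntegrableOn (fun t : ℝ => (t ^ 3 + 1) ^ (-(2 : ℝ) / 3)) (Set.Ioi 1) := by
    have h3 : IntegrableOn (fun t : ℝ => 3 * (t^3 + 1) ^ (-(2:ℝ)/3)) (Set.Ioi 1) :=
      hint3.congr_fun cv_pointwise measurableSet_Ioi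
    refine MeasureTheory.IntegrableOn.congr_fun (h3.const_mul (3⁻¹ : ℝ))
      (fun t _ => ?_) measurableSet_Ioi
    show 3⁻¹ * (3 * _) = _
    ring
  have hval : ∫ u in Set.Ioo (0:ℝ) (1/2), gbeta u
      = 3 * ∫ t in Set.Ioi (1:ℝ), (t ^ 3 + 1) ^ (-(2 : ℝ) / 3) := by
    rw [← cv_img, integral_image_eq_integral_abs_deriv_smul measurableSet_Ioi cv_deriv cv_inj,
      MeasureTheory.setIntegral_congr_fun measurableSet_Ioi cv_pointwise,
      MeasureTheory.integral_const_mul]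
  have hbeta : ∫ u in Set.Ioo (0:ℝ) 1, gbeta u = Real.Gamma (1/3) ^ 2 / Real.Gamma (2/3) := by
    rw [← integral_Ioc_eq_integral_Ioo, ← intervalIntegral.integral_of_le (by norm_num : (0:ℝ) ≤ 1)]
    exact beta_val
  constructor
  · rwa [integrableOn_Ici_iff_integrableOn_Ioi]
  · rw [MeasureTheory.integral_Ici_eq_integral_Ioi]
    have := gbeta_split
    rw [hbeta, hval] at this
    have hpos : 0 < Real.Gamma (2/3) := Real.Gamma_pos_of_pos (by norm_num)
    field_simp at this ⊢
    linarith
end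

section
/- For every real R ≥ 1, the integral K(R) := ∫_R^∞ (4r^3 - 1)^(-1/2) dr converges and satisfies K(R) = R^(-1/2) · Σ_{j=0}^∞ binomial(j - 1/2, j) / (1 + 6j) · (4R^3)^(-j). -/
/-- The generalized binomial coefficient `x choose j` for real `x`. -/
noncomputable def genBinom (x : ℝ) (j : ℕ) : ℝ :=
  (∏ i ∈ Finset.range j, (x - i)) / (j.factorial : ℝ)

namespace KSeriesAux

open Set

noncomputable def c (j : ℕ) : ℝ := genBinom ((j : ℝ) - 1 / 2) j

lemma c_zero : c 0 = 1 := by simp [c, genBinom]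

lemma c_succ (j : ℕ) : c (j + 1) = ((j : ℝ) + 1 / 2) / ((j : ℝ) + 1) * c j := by
  unfold c genBinom
  rw [Finset.prod_range_succ']
  have h1 : ∀ i ∈ Finset.range j,
      ((↑(j + 1) : ℝ) - 1 / 2 - ↑(i + 1)) = ((j : ℝ) - 1 / 2 - i) := by
    intro i _; push_cast; ring
  rw [Finset.prod_congr rfl h1, Nat.factorial_succ]
  have hfac : (0 : ℝ) < j.factorial := by positivity
  have hj1 : ((j : ℝ) + 1) ≠ 0 := by positivity
  push_cast
  field_simp
  ring

lemma c_pos (j : ℕ) : 0 < c j := by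
  unfold c genBinom
  apply div_pos
  · apply Finset.prod_pos
    intro i hi
    have : (i : ℝ) + 1 ≤ j := by exact_mod_cast Finset.mem_range.mp hi
    linarith
  · positivity

lemma prod_sub_eq_factorial (j : ℕ) :
    ∏ i ∈ Finset.range j, ((j : ℝ) - i) = j.factorial := by
  induction j with
  | zero => simp
  | succ n ih =>
    rw [Finset.prod_range_succ']
    have h1 : ∀ i ∈ Finset.range n,
        ((↑(n + 1) : ℝ) - ↑(i + 1)) = ((n : ℝ) - i) := by
      intro i _; push_cast; ring
    rw [Finset.prod_congr rfl h1, ih, Nat.factorial_succ]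
    push_cast; ring

lemma c_le_one (j : ℕ) : c j ≤ 1 := by
  unfold c genBinom
  rw [div_le_one (by positivity)]
  calc ∏ i ∈ Finset.range j, ((j : ℝ) - 1 / 2 - i)
      ≤ ∏ i ∈ Finset.range j, ((j : ℝ) - i) := by
        apply Finset.prod_le_prod
        · intro i hi
          have : (i : ℝ) + 1 ≤ j := by exact_mod_cast Finset.mem_range.mp hi
          linarith
        · intro i _; linarith
    _ = j.factorial := prod_sub_eq_factorial j

noncomputable def g (u : ℝ) : ℝ := ∑' j, c j * u ^ j

lemma summable_g {u : ℝ} (hu : |u| < 1) : Summable (fun j => c j * u ^ j) := by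
  apply Summable.of_norm_bounded (summable_geometric_of_lt_one (abs_nonneg u) hu)
  intro j
  rw [norm_mul, norm_pow, Real.norm_eq_abs, Real.norm_eq_abs,
    abs_of_pos (c_pos j)]
  calc c j * |u| ^ j ≤ 1 * |u| ^ j := by
        apply mul_le_mul_of_nonneg_right (c_le_one j) (by positivity)
    _ = |u| ^ j := one_mul _

noncomputable def U (j : ℕ) : ℝ := (j : ℝ) * (1 / 2) ^ (j - 1)

lemma summable_U : Summable U := by
  have h : Summable (fun j : ℕ => 2 * ((j : ℝ) * (1 / 2) ^ j)) :=
    (summable_pow_mul_geometric_of_norm_lt_one 1 (r := (1 / 2 : ℝ))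
      (by rw [Real.norm_eq_abs, abs_of_pos (by norm_num : (0:ℝ) < 1/2)]; norm_num)).mul_left 2 |>.congr (by intro j; ring_nf)
  apply h.congr
  intro j
  match j with
  | 0 => simp [U]
  | n + 1 => simp [U, pow_succ]; ring

lemma deriv_bound {j : ℕ} {y : ℝ} (hy : |y| ≤ 1 / 2) :
    ‖c j * ((j : ℝ) * y ^ (j - 1))‖ ≤ U j := by
  rw [norm_mul, norm_mul, norm_pow, Real.norm_eq_abs, Real.norm_eq_abs, Real.norm_eq_abs,
    abs_of_pos (c_pos j), Nat.abs_cast]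
  unfold U
  calc c j * ((j : ℝ) * |y| ^ (j - 1)) ≤ 1 * ((j : ℝ) * (1 / 2) ^ (j - 1)) := by
        apply mul_le_mul (c_le_one j) ?_ (by positivity) (by norm_num)
        exact mul_le_mul_of_nonneg_left (pow_le_pow_left₀ (abs_nonneg y) hy _) (by positivity)
    _ = (j : ℝ) * (1 / 2) ^ (j - 1) := one_mul _

lemma summable_deriv {u : ℝ} (hu : |u| ≤ 1 / 2) :
    Summable (fun j => c j * ((j : ℝ) * u ^ (j - 1))) :=
  Summable.of_norm_bounded summable_U (fun _ => deriv_bound hu)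

lemma hasDerivAt_g {u : ℝ} (hu : u ∈ Ioo (-(1 / 2) : ℝ) (1 / 2)) :
    HasDerivAt g (∑' j, c j * ((j : ℝ) * u ^ (j - 1))) u := by
  apply hasDerivAt_tsum_of_isPreconnected summable_U isOpen_Ioo
    (isPreconnected_Ioo) (y₀ := 0)
    (fun n y _ => (hasDerivAt_pow n y).const_mul (c n))
    (fun n y hy => deriv_bound (by rw [abs_le]; constructor <;> [linarith [hy.1]; linarith [hy.2]]))
    (by norm_num)
    (by
      apply summable_of_ne_finset_zero (s := {0})
      intro j hj
      simp only [Finset.mem_singleton] at hj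
      simp [zero_pow hj])
    hu

lemma summable_lin {u : ℝ} (hu : |u| ≤ 1 / 2) (a b : ℝ) :
    Summable (fun j : ℕ => (a * j + b) * c j * u ^ j) := by
  have h1 : Summable (fun j : ℕ => (j : ℝ) * (1 / 2 : ℝ) ^ j) := by
    simpa using summable_pow_mul_geometric_of_norm_lt_one 1 (r := (1 / 2 : ℝ))
      (by rw [Real.norm_eq_abs, abs_of_pos (by norm_num : (0:ℝ) < 1/2)]; norm_num)
  have h2 : Summable (fun j : ℕ => (1 / 2 : ℝ) ^ j) :=
    summable_geometric_of_lt_one (by norm_num) (by norm_num)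
  have hg : Summable (fun j : ℕ => (|a| * j + |b|) * (1 / 2 : ℝ) ^ j) := by
    apply ((h1.mul_left |a|).add (h2.mul_left |b|)).congr
    intro j; ring
  apply Summable.of_norm_bounded hg
  intro j
  rw [norm_mul, norm_mul, Real.norm_eq_abs, Real.norm_eq_abs, Real.norm_eq_abs,
    abs_of_pos (c_pos j), abs_pow]
  have e1 : |a * (j:ℝ) + b| ≤ |a| * j + |b| := by
    calc |a * (j:ℝ) + b| ≤ |a * (j:ℝ)| + |b| := abs_add_le _ _
      _ = |a| * j + |b| := by rw [abs_mul, Nat.abs_cast]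
  have e2 : |u| ^ j ≤ (1 / 2 : ℝ) ^ j := pow_le_pow_left₀ (abs_nonneg u) hu j
  calc |a * (j:ℝ) + b| * c j * |u| ^ j
      ≤ (|a| * j + |b|) * 1 * (1 / 2 : ℝ) ^ j := by
        apply mul_le_mul
        · exact mul_le_mul e1 (c_le_one j) (c_pos j).le (by positivity)
        · exact e2
        · positivity
        · positivity
    _ = (|a| * j + |b|) * (1 / 2 : ℝ) ^ j := by ring

lemma ode {u : ℝ} (hu : |u| < 1 / 2) :
    2 * (1 - u) * (∑' j, c j * ((j : ℝ) * u ^ (j - 1))) = g u := by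
  have hu' : |u| ≤ 1 / 2 := hu.le
  have S2 := summable_deriv hu'
  have SA : Summable (fun j : ℕ => (2 * (j:ℝ) + 1) * c j * u ^ j) := summable_lin hu' 2 1
  have SB : Summable (fun j : ℕ => 2 * (j:ℝ) * c j * u ^ j) := by
    apply (summable_lin hu' 2 0).congr
    intro j; ring
  have SBs : Summable (fun j : ℕ => 2 * ((j:ℝ) + 1) * c (j + 1) * u ^ (j + 1)) := by
    apply ((summable_nat_add_iff 1).mpr SB).congr
    intro j; push_cast; ring
  have key : ∀ j : ℕ, 2 * ((j:ℝ) + 1) * c (j + 1) = (2 * (j:ℝ) + 1) * c j := by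
    intro j
    have hj : ((j:ℝ) + 1) ≠ 0 := by positivity
    have h2 : ((j:ℝ) + 1) * c (j + 1) = ((j:ℝ) + 1 / 2) * c j := by
      calc ((j:ℝ) + 1) * c (j + 1)
          = ((j:ℝ) + 1 / 2) / ((j:ℝ) + 1) * ((j:ℝ) + 1) * c j := by rw [c_succ]; ring
        _ = ((j:ℝ) + 1 / 2) * c j := by rw [div_mul_cancel₀ _ hj]
    linear_combination 2 * h2
  have hD : (∑' j, c j * ((j : ℝ) * u ^ (j - 1)))
      = ∑' j : ℕ, c (j + 1) * (((j:ℝ) + 1) * u ^ j) := by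
    rw [Summable.tsum_eq_zero_add S2]
    push_cast
    simp
  rw [hD, ← tsum_mul_left]
  have congr1 : ∀ j : ℕ, 2 * (1 - u) * (c (j + 1) * (((j:ℝ) + 1) * u ^ j)) =
      (2 * (j:ℝ) + 1) * c j * u ^ j - 2 * ((j:ℝ) + 1) * c (j + 1) * u ^ (j + 1) := by
    intro j
    calc 2 * (1 - u) * (c (j + 1) * (((j:ℝ) + 1) * u ^ j))
        = (2 * ((j:ℝ) + 1) * c (j + 1)) * u ^ j
            - 2 * ((j:ℝ) + 1) * c (j + 1) * u ^ (j + 1) := by ring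
      _ = _ := by rw [key j]
  rw [tsum_congr congr1, Summable.tsum_sub SA SBs]
  have hB' : (∑' j : ℕ, 2 * ((j:ℝ) + 1) * c (j + 1) * u ^ (j + 1))
      = ∑' j : ℕ, 2 * (j:ℝ) * c j * u ^ j := by
    rw [Summable.tsum_eq_zero_add SB]
    push_cast
    simp
  rw [hB', ← Summable.tsum_sub SA SB]
  unfold g
  apply tsum_congr
  intro j
  ring

lemma g_eq {u : ℝ} (h0 : 0 ≤ u) (h2 : u < 1 / 2) : g u = (1 - u) ^ (-(1 : ℝ) / 2) := by
  have hmem : ∀ x ∈ Icc (0:ℝ) u, x ∈ Ioo (-(1 / 2) : ℝ) (1 / 2) := by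
    intro x hx
    exact ⟨by linarith [hx.1], by linarith [hx.2]⟩
  have hderiv : ∀ x ∈ Ioo (-(1 / 2) : ℝ) (1 / 2),
      HasDerivAt (fun y => (1 - y) * g y ^ 2) 0 x := by
    intro x hx
    have hgx := hasDerivAt_g hx
    set D := ∑' j, c j * ((j : ℝ) * x ^ (j - 1)) with hDdef
    have h1 : HasDerivAt (fun y : ℝ => (1 : ℝ) - y) (-1) x := (hasDerivAt_id x).const_sub 1
    have h2 : HasDerivAt (fun y => g y ^ 2) (((2:ℕ):ℝ) * g x ^ (2 - 1) * D) x := hgx.pow 2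
    have hmul : HasDerivAt (fun y => (1 - y) * g y ^ 2)
        (-1 * g x ^ 2 + (1 - x) * (((2:ℕ):ℝ) * g x ^ (2 - 1) * D)) x := h1.mul h2
    convert hmul using 1
    have hode : 2 * (1 - x) * D = g x := ode (abs_lt.mpr ⟨by linarith [hx.1], hx.2⟩)
    push_cast
    linear_combination (-(g x)) * hode
  have hcont : ContinuousOn (fun y => (1 - y) * g y ^ 2) (Icc 0 u) := fun x hx =>
    ((hderiv x (hmem x hx)).continuousAt).continuousWithinAt
  have hconst := constant_of_has_deriv_right_zero hcont
    (fun x hx => (hderiv x (hmem x (Ico_subset_Icc_self hx))).hasDerivWithinAt)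
    u (right_mem_Icc.mpr h0)
  have hg0 : g 0 = 1 := by
    unfold g
    rw [tsum_eq_single 0 (fun j hj => by simp [zero_pow hj])]
    simp [c_zero]
  have hkey : (1 - u) * g u ^ 2 = 1 := by
    rw [hconst, hg0]; norm_num
  have hge : 1 ≤ g u := by
    have hs := summable_g (u := u) (by rw [abs_of_nonneg h0]; linarith)
    have := Summable.le_tsum hs 0 (fun j _ => mul_nonneg (c_pos j).le (pow_nonneg h0 j))
    simpa [c_zero, g] using this
  have h1u : 0 < 1 - u := by linarith
  have hg2 : g u ^ 2 = (1 - u)⁻¹ := by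
    field_simp
    linarith [hkey]
  have hsqrt : g u = Real.sqrt ((1 - u)⁻¹) := by
    rw [← hg2, Real.sqrt_sq (by linarith)]
  rw [hsqrt, Real.sqrt_inv, Real.sqrt_eq_rpow, ← Real.rpow_neg h1u.le]
  norm_num

lemma hasSum_binomial {u : ℝ} (h0 : 0 ≤ u) (h2 : u < 1 / 2) :
    HasSum (fun j => c j * u ^ j) ((1 - u) ^ (-(1 : ℝ) / 2)) := by
  have hs := summable_g (u := u) (by rw [abs_of_nonneg h0]; linarith)
  have := hs.hasSum
  rwa [show (∑' j, c j * u ^ j) = (1 - u) ^ (-(1 : ℝ) / 2) from g_eq h0 h2] at this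

noncomputable def F (j : ℕ) (r : ℝ) : ℝ :=
  c j / 2 * (4 : ℝ)⁻¹ ^ j * r ^ (-(3 : ℝ) / 2 - 3 * (j : ℝ))

lemma hasSum_F {r : ℝ} (hr : 1 ≤ r) :
    HasSum (fun j => F j r) ((4 * r ^ 3 - 1) ^ (-(1 : ℝ) / 2)) := by
  have hr0 : (0 : ℝ) < r := lt_of_lt_of_le one_pos hr
  have hr3 : (0 : ℝ) < r ^ 3 := by positivity
  have h4r : (0 : ℝ) < 4 * r ^ 3 := by positivity
  set u : ℝ := (4 * r ^ 3)⁻¹ with hudef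
  have hu0 : (0 : ℝ) ≤ u := by positivity
  have h13 : (1 : ℝ) ≤ r ^ 3 := by
    simpa using pow_le_pow_left₀ (by norm_num : (0:ℝ) ≤ 1) hr 3
  have hu4 : u ≤ 1 / 4 := by
    rw [hudef]
    have h44 : (4 : ℝ) ≤ 4 * r ^ 3 := by linarith
    calc (4 * r ^ 3)⁻¹ ≤ (4 : ℝ)⁻¹ := by
          apply inv_anti₀ (by norm_num) h44
      _ = 1 / 4 := by norm_num
  have h1u : (0 : ℝ) < 1 - u := by linarith
  have hsum := hasSum_binomial hu0 (by linarith)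
  have h2 := hsum.mul_left ((4 * r ^ 3) ^ (-(1 : ℝ) / 2))
  have e1 : ((4 : ℝ) * r ^ 3) ^ (-(1 : ℝ) / 2) = 2⁻¹ * r ^ (-(3 : ℝ) / 2) := by
    rw [Real.mul_rpow (by norm_num) hr3.le]
    congr 1
    · rw [show ((4 : ℝ)) = (2 : ℝ) ^ (2 : ℕ) by norm_num, ← Real.rpow_natCast (2 : ℝ) 2,
        ← Real.rpow_mul (by norm_num : (0:ℝ) ≤ 2)]
      norm_num
    · rw [← Real.rpow_natCast r 3, ← Real.rpow_mul hr0.le]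
      norm_num
  have e2 : ∀ j : ℕ, u ^ j = (4 : ℝ)⁻¹ ^ j * r ^ (-(3 : ℝ) * j) := by
    intro j
    have hu' : u = 4⁻¹ * r ^ (-(3 : ℝ)) := by
      rw [hudef, mul_inv, ← Real.rpow_natCast r 3, ← Real.rpow_neg hr0.le]
      norm_num
    rw [hu', mul_pow, ← Real.rpow_natCast (r ^ (-(3 : ℝ))) j, ← Real.rpow_mul hr0.le]
  have hterm : ∀ j : ℕ, (4 * r ^ 3 : ℝ) ^ (-(1 : ℝ) / 2) * (c j * u ^ j) = F j r := by
    intro j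
    rw [e1, e2 j, F, show (-(3 : ℝ) / 2 - 3 * (j : ℝ)) = (-(3 : ℝ) / 2) + (-(3 : ℝ) * j) by ring,
      Real.rpow_add hr0]
    ring
  have hbase : (4 * r ^ 3 - 1 : ℝ) ^ (-(1 : ℝ) / 2)
      = (4 * r ^ 3) ^ (-(1 : ℝ) / 2) * (1 - u) ^ (-(1 : ℝ) / 2) := by
    rw [← Real.mul_rpow h4r.le h1u.le]
    congr 1
    rw [hudef]
    field_simp
  rw [hbase]
  exact (funext hterm) ▸ h2

lemma integral_term (j : ℕ) {R : ℝ} (hR : 1 ≤ R) :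
    ∫ r in Ioi R, F j r
      = R ^ (-(1 : ℝ) / 2) *
          (genBinom ((j : ℝ) - 1 / 2) j / (1 + 6 * (j : ℝ)) * (4 * R ^ 3) ^ (-(j : ℤ))) := by
  have hR0 : (0 : ℝ) < R := lt_of_lt_of_le one_pos hR
  have hj0 : (0 : ℝ) ≤ (j : ℝ) := Nat.cast_nonneg j
  have ha : (-(3 : ℝ) / 2 - 3 * (j : ℝ)) < -1 := by linarith
  unfold F
  rw [MeasureTheory.integral_const_mul, integral_Ioi_rpow_of_lt ha hR0]
  have hz : ((4 : ℝ) * R ^ 3) ^ (-(j : ℤ)) = ((4 : ℝ) ^ j * R ^ (3 * j))⁻¹ := by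
    rw [zpow_neg, zpow_natCast, mul_pow, ← pow_mul]
  have hr1 : R ^ (-(3 : ℝ) / 2 - 3 * (j : ℝ) + 1)
      = R ^ (-(1 : ℝ) / 2) * (R ^ (3 * j) : ℝ)⁻¹ := by
    rw [show (-(3 : ℝ) / 2 - 3 * (j : ℝ) + 1) = (-(1 : ℝ) / 2) + (-(3 * (j : ℝ))) by ring,
      Real.rpow_add hR0, Real.rpow_neg hR0.le]
    congr 2
    rw [← Real.rpow_natCast R (3 * j)]
    push_cast
    ring_nf
  rw [hz, hr1]
  have hcj : genBinom ((j : ℝ) - 1 / 2) j = c j := rfl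
  rw [hcj]
  have hd2 : (1 + 6 * (j : ℝ)) ≠ 0 := by positivity
  have hd3 : (R : ℝ) ^ (3 * j) ≠ 0 := by positivity
  have hd4 : ((4 : ℝ)) ^ j ≠ 0 := by positivity
  rw [show (-(3 : ℝ) / 2 - 3 * (j : ℝ) + 1) = -((1 + 6 * (j : ℝ)) / 2) by ring,
    neg_div_neg_eq, div_div_eq_mul_div, mul_inv]
  field_simp
  ring_nf
  rw [mul_assoc, ← mul_pow]
  norm_num

lemma cont_main {R : ℝ} (hR : 1 ≤ R) :
    ContinuousOn (fun r : ℝ => (4 * r ^ 3 - 1) ^ (-(1 : ℝ) / 2)) (Ioi R) := by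
  apply ContinuousOn.rpow_const
  · exact (by continuity : Continuous fun r : ℝ => 4 * r ^ 3 - 1).continuousOn
  · intro x hx
    have hx1 : (1 : ℝ) < x := lt_of_le_of_lt hR hx
    have h13 : (1 : ℝ) ≤ x ^ 3 := by
      simpa using pow_le_pow_left₀ (by norm_num : (0:ℝ) ≤ 1) hx1.le 3
    left
    intro hcon
    linarith

lemma integrable_main {R : ℝ} (hR : 1 ≤ R) :
    MeasureTheory.IntegrableOn (fun r : ℝ => (4 * r ^ 3 - 1) ^ (-(1 : ℝ) / 2)) (Ioi R) := by
  have hR0 : (0 : ℝ) < R := lt_of_lt_of_le one_pos hR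
  have hint : MeasureTheory.IntegrableOn (fun r : ℝ => r ^ (-(3 : ℝ) / 2)) (Ioi R) := by
    have := integrableOn_Ioi_rpow_of_lt (by norm_num : (-(3:ℝ)/2) < -1) hR0
    exact this
  apply hint.mono'
  · exact (cont_main hR).aestronglyMeasurable measurableSet_Ioi
  · rw [MeasureTheory.ae_restrict_iff' measurableSet_Ioi]
    filter_upwards with r hr
    have hr1 : (1 : ℝ) < r := lt_of_le_of_lt hR hr
    have h13 : (1 : ℝ) ≤ r ^ 3 := by
      simpa using pow_le_pow_left₀ (by norm_num : (0:ℝ) ≤ 1) hr1.le 3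
    have hpos : (0 : ℝ) < 4 * r ^ 3 - 1 := by linarith
    rw [Real.norm_eq_abs, abs_of_nonneg (Real.rpow_nonneg hpos.le _)]
    calc (4 * r ^ 3 - 1) ^ (-(1 : ℝ) / 2)
        ≤ ((r : ℝ) ^ 3) ^ (-(1 : ℝ) / 2) :=
          Real.rpow_le_rpow_of_nonpos (by positivity) (by linarith) (by norm_num)
      _ = r ^ (-(3 : ℝ) / 2) := by
          rw [← Real.rpow_natCast r 3, ← Real.rpow_mul (by linarith : (0:ℝ) ≤ r)]
          norm_num

end KSeriesAux

open MeasureTheory in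
theorem K_series (R : ℝ) (hR : 1 ≤ R) :
    IntegrableOn (fun r : ℝ => (4 * r ^ 3 - 1) ^ (-(1 : ℝ) / 2)) (Set.Ici R) ∧
    ∫ r in Set.Ici R, (4 * r ^ 3 - 1) ^ (-(1 : ℝ) / 2) =
      R ^ (-(1 : ℝ) / 2) *
        ∑' j : ℕ, genBinom ((j : ℝ) - 1 / 2) j / (1 + 6 * (j : ℝ)) *
          (4 * R ^ 3) ^ (-(j : ℤ)) := by
  classical
  open KSeriesAux Set in
  have hR0 : (0 : ℝ) < R := lt_of_lt_of_le one_pos hR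
  have hIoi := integrable_main hR
  have hIci : IntegrableOn (fun r : ℝ => (4 * r ^ 3 - 1) ^ (-(1 : ℝ) / 2)) (Set.Ici R) :=
    (integrableOn_Ici_iff_integrableOn_Ioi).mpr hIoi
  refine ⟨hIci, ?_⟩
  rw [MeasureTheory.integral_Ici_eq_integral_Ioi]
  have hpointwise : ∀ r ∈ Ioi R, HasSum (fun j => F j r)
      ((4 * r ^ 3 - 1) ^ (-(1 : ℝ) / 2)) :=
    fun r hr => hasSum_F (le_of_lt (lt_of_le_of_lt hR hr))
  have hFnonneg : ∀ j : ℕ, ∀ r ∈ Ioi R, 0 ≤ F j r := by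
    intro j r hr
    have hr0 : (0 : ℝ) < r := lt_trans hR0 hr
    have hc := (c_pos j).le
    unfold F
    have := Real.rpow_nonneg hr0.le (-(3 : ℝ) / 2 - 3 * (j : ℝ))
    positivity
  have hmeas : ∀ j : ℕ, AEStronglyMeasurable (F j) (volume.restrict (Ioi R)) := by
    intro j
    apply ContinuousOn.aestronglyMeasurable _ measurableSet_Ioi
    apply ContinuousOn.mul continuousOn_const
    apply ContinuousOn.rpow_const continuousOn_id
    intro x hx
    left
    exact ne_of_gt (lt_trans hR0 hx)
  have hbound : ∀ j : ℕ, ∀ᵐ r ∂(volume.restrict (Ioi R)), ‖F j r‖ ≤ F j r := by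
    intro j
    rw [MeasureTheory.ae_restrict_iff' measurableSet_Ioi]
    filter_upwards with r hr
    rw [Real.norm_eq_abs, abs_of_nonneg (hFnonneg j r hr)]
  have hsummable : ∀ᵐ r ∂(volume.restrict (Ioi R)), Summable fun j => F j r := by
    rw [MeasureTheory.ae_restrict_iff' measurableSet_Ioi]
    filter_upwards with r hr
    exact (hpointwise r hr).summable
  have htsum_int : Integrable (fun r => ∑' j, F j r) (volume.restrict (Ioi R)) := by
    apply hIoi.congr
    filter_upwards [MeasureTheory.ae_restrict_mem measurableSet_Ioi] with r hr
    exact ((hpointwise r hr).tsum_eq).symm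
  have hlim : ∀ᵐ r ∂(volume.restrict (Ioi R)), HasSum (fun j => F j r)
      ((4 * r ^ 3 - 1) ^ (-(1 : ℝ) / 2)) := by
    rw [MeasureTheory.ae_restrict_iff' measurableSet_Ioi]
    filter_upwards with r hr
    exact hpointwise r hr
  have hsum := MeasureTheory.hasSum_integral_of_dominated_convergence F hmeas hbound
    hsummable htsum_int hlim
  rw [← hsum.tsum_eq, tsum_congr (fun j => integral_term j hR), tsum_mul_left]
end

section
/- Let p be a prime with p ≡ 1 (mod 3). Then there exists a unique integer a with a ≡ 1 (mod 3) such that 4p = a^2 + 27 b^2 for some positive integer b. -/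
set_option maxHeartbeats 1000000

/-- If `p ≡ 1 (mod 3)` is prime, then `-3` is a square mod `p`. -/
lemma aux_exists_sq_eq_neg_three (p : ℕ) (hp : p.Prime) (h3 : p % 3 = 1) :
    ∃ c : ZMod p, c ^ 2 = -3 := by
  haveI : Fact p.Prime := ⟨hp⟩
  have hcard : Fintype.card (ZMod p)ˣ = p - 1 := by
    rw [ZMod.card_units_eq_totient, Nat.totient_prime hp]
  have hdvd : 3 ∣ Fintype.card (ZMod p)ˣ := by
    rw [hcard]; omega
  obtain ⟨ζ, hζ⟩ := exists_prime_orderOf_dvd_card 3 hdvd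
  set z : ZMod p := (ζ : ZMod p) with hz
  have hz3 : z ^ 3 = 1 := by
    have : ζ ^ 3 = 1 := by rw [← hζ]; exact pow_orderOf_eq_one ζ
    have h2 := congrArg (Units.val) this
    push_cast at h2
    exact h2
  have hzne : z ≠ 1 := by
    intro h
    have : ζ = 1 := Units.ext h
    rw [this, orderOf_one] at hζ; omega
  have hsum : z ^ 2 + z + 1 = 0 := by
    have h0 : (z - 1) * (z ^ 2 + z + 1) = 0 := by linear_combination hz3
    rcases mul_eq_zero.mp h0 with h | h
    · exact absurd (sub_eq_zero.mp h) hzne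
    · exact h
  exact ⟨2 * z + 1, by linear_combination 4 * hsum⟩

/-- A prime `p ≡ 1 (mod 3)` is of the form `x² + 3y²`. -/
lemma aux_sq_add_three_sq (p : ℕ) (hp : p.Prime) (h3 : p % 3 = 1) :
    ∃ x y : ℤ, (p : ℤ) = x ^ 2 + 3 * y ^ 2 := by
  haveI : Fact p.Prime := ⟨hp⟩
  have hpne2 : p ≠ 2 := by intro h; rw [h] at h3; omega
  obtain ⟨c, hc⟩ := aux_exists_sq_eq_neg_three p hp h3
  set n := Nat.sqrt p with hn
  have hnsq : n ^ 2 < p := by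
    rcases lt_or_eq_of_le (Nat.sqrt_le' p) with h | h
    · exact h
    · exfalso
      have hd : n ∣ p := ⟨n, by rw [← h]; ring⟩
      rcases hp.eq_one_or_self_of_dvd n hd with h1 | h1 <;> rw [hn] at h1 <;>
        rw [h1] at h <;> nlinarith [hp.one_lt]
  have hcard : Fintype.card (ZMod p) < ((Finset.range (n+1)) ×ˢ (Finset.range (n+1))).card := by
    rw [Finset.card_product, Finset.card_range, ZMod.card]
    have := Nat.lt_succ_sqrt' p
    nlinarith
  obtain ⟨⟨a₁, b₁⟩, hmem₁, ⟨a₂, b₂⟩, hmem₂, hne, heq⟩ :=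
    Finset.exists_ne_map_eq_of_card_lt_of_maps_to hcard
      (f := fun ab => (ab.1 : ZMod p) * c - (ab.2 : ZMod p))
      (fun a _ => Finset.mem_univ _)
  simp only [Finset.mem_product, Finset.mem_range] at hmem₁ hmem₂
  simp only at heq
  set A : ℤ := (a₁ : ℤ) - a₂ with hA
  set B : ℤ := (b₁ : ℤ) - b₂ with hB
  have hAB : ((B : ZMod p)) = (A : ZMod p) * c := by
    rw [hA, hB]
    push_cast
    linear_combination -heq
  have hdvd : (p : ℤ) ∣ B ^ 2 + 3 * A ^ 2 := by
    rw [← ZMod.intCast_zmod_eq_zero_iff_dvd]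
    push_cast
    linear_combination ((B : ZMod p) + (A : ZMod p) * c) * hAB + ((A : ZMod p))^2 * hc
  have hA2 : A ^ 2 ≤ (n : ℤ) ^ 2 := by
    have := hmem₁.1; have := hmem₂.1
    apply sq_le_sq' <;> omega
  have hB2 : B ^ 2 ≤ (n : ℤ) ^ 2 := by
    have := hmem₁.2; have := hmem₂.2
    apply sq_le_sq' <;> omega
  have hApos : ¬(A = 0 ∧ B = 0) := by
    rintro ⟨h1, h2⟩
    apply hne
    have : a₁ = a₂ := by omega
    have : b₁ = b₂ := by omega
    simp_all
  have hNpos : 0 < B ^ 2 + 3 * A ^ 2 := by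
    rcases not_and_or.mp hApos with h | h
    · have : 0 < A ^ 2 := by positivity
      nlinarith [sq_nonneg B]
    · have : 0 < B ^ 2 := by positivity
      nlinarith [sq_nonneg A]
  have hn2p : (n : ℤ) ^ 2 < (p : ℤ) := by exact_mod_cast hnsq
  have hNlt : B ^ 2 + 3 * A ^ 2 < 4 * p := by nlinarith
  obtain ⟨t, ht⟩ := hdvd
  have hppos : (0 : ℤ) < p := by exact_mod_cast hp.pos
  have ht1 : 0 < t := by nlinarith
  have ht2 : t < 4 := by nlinarith
  have htc : t = 1 ∨ t = 2 ∨ t = 3 := by omega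
  rcases htc with rfl | rfl | rfl
  · exact ⟨B, A, by linarith⟩
  · exfalso
    have h2p : B ^ 2 + 3 * A ^ 2 = 2 * (p : ℤ) := by linarith
    have h4 := congrArg (fun z : ℤ => (z : ZMod 4)) h2p
    push_cast at h4
    have hodd : p % 2 = 1 := by rcases hp.eq_two_or_odd with h | h; · omega
                                · exact h
    have hp4 : p % 4 = 1 ∨ p % 4 = 3 := by omega
    have hpm : (p : ZMod 4) = ((p % 4 : ℕ) : ZMod 4) := by rw [ZMod.natCast_mod]
    have key : ∀ x y : ZMod 4, x ^ 2 + 3 * y ^ 2 ≠ 2 := by decide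
    rcases hp4 with h | h <;> rw [hpm, h] at h4 <;> exact key _ _ (h4.trans (by decide))
  · have h3B : (3 : ℤ) ∣ B := by
      have h1 : (3 : ℤ) ∣ B ^ 2 := ⟨(p : ℤ) - A ^ 2, by linarith⟩
      exact Int.prime_three.dvd_of_dvd_pow h1
    obtain ⟨B', hB'⟩ := h3B
    refine ⟨A, B', ?_⟩
    have h9 : 9 * B' ^ 2 + 3 * A ^ 2 = 3 * p := by
      rw [hB'] at ht; ring_nf; ring_nf at ht; linarith
    linarith

/-- Existence of the normalized representation `4p = a² + 27b²` with `a ≡ 1 (mod 3)`. -/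
lemma aux_exists_rep (p : ℕ) (hp : p.Prime) (h3 : p % 3 = 1) :
    ∃ a b : ℤ, a % 3 = 1 ∧ 0 < b ∧ 4 * (p : ℤ) = a ^ 2 + 27 * b ^ 2 := by
  obtain ⟨x, y, hxy⟩ := aux_sq_add_three_sq p hp h3
  have hpne3 : p ≠ 3 := by intro h; rw [h] at h3; omega
  have hp3 : ¬ (3 : ℤ) ∣ x := by
    rintro ⟨x', rfl⟩
    have hd : (3 : ℤ) ∣ (p : ℤ) := ⟨3 * x' ^ 2 + y ^ 2, by linarith [hxy]⟩
    have hd' : (3 : ℕ) ∣ p := by exact_mod_cast hd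
    exact hpne3 ((Nat.prime_dvd_prime_iff_eq Nat.prime_three hp).mp hd').symm
  have hx1 : x % 3 = 1 ∨ x % 3 = 2 := by omega
  have hy1 : y % 3 = 0 ∨ y % 3 = 1 ∨ y % 3 = 2 := by omega
  have hcase1 : y % 3 = 0 → ∃ a b : ℤ, 4 * (p : ℤ) = a ^ 2 + 27 * b ^ 2 := by
    intro h
    obtain ⟨c, hc⟩ : ∃ c, y = 3 * c := ⟨y / 3, by omega⟩
    exact ⟨2 * x, 2 * c, by linear_combination 4 * hxy + (12 * y + 36 * c) * hc⟩
  have hcase2 : x % 3 = y % 3 → ∃ a b : ℤ, 4 * (p : ℤ) = a ^ 2 + 27 * b ^ 2 := by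
    intro h
    obtain ⟨c, hc⟩ : ∃ c, x - y = 3 * c := ⟨(x - y) / 3, by omega⟩
    exact ⟨x + 3 * y, c, by linear_combination 4 * hxy + (3 * (x - y) + 9 * c) * hc⟩
  have hcase3 : x % 3 + y % 3 = 3 → ∃ a b : ℤ, 4 * (p : ℤ) = a ^ 2 + 27 * b ^ 2 := by
    intro h
    obtain ⟨c, hc⟩ : ∃ c, x + y = 3 * c := ⟨(x + y) / 3, by omega⟩
    exact ⟨x - 3 * y, c, by linear_combination 4 * hxy + (3 * (x + y) + 9 * c) * hc⟩
  have hrep : ∃ a b : ℤ, 4 * (p : ℤ) = a ^ 2 + 27 * b ^ 2 := by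
    rcases hx1 with hx | hx <;> rcases hy1 with hy | hy | hy
    · exact hcase1 hy
    · exact hcase2 (by omega)
    · exact hcase3 (by omega)
    · exact hcase1 hy
    · exact hcase3 (by omega)
    · exact hcase2 (by omega)
  obtain ⟨a, b, hab⟩ := hrep
  have hbne : b ≠ 0 := by
    rintro rfl
    have h4p : 4 * (p : ℤ) = a ^ 2 := by linarith
    have h2a : (2 : ℤ) ∣ a := by
      have : (2 : ℤ) ∣ a ^ 2 := ⟨2 * p, by linarith⟩
      exact Int.prime_two.dvd_of_dvd_pow this
    obtain ⟨a', rfl⟩ := h2a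
    have hpa : (p : ℤ) = a' ^ 2 := by nlinarith
    have h1 : (↑(a'.natAbs * a'.natAbs) : ℤ) = (p : ℤ) := by
      rw [Int.natAbs_mul_self]; linear_combination -hpa
    have h1' : a'.natAbs * a'.natAbs = p := by exact_mod_cast h1
    rcases hp.eq_one_or_self_of_dvd _ ⟨_, h1'.symm⟩ with h2 | h2 <;>
      rw [h2] at h1' <;> nlinarith [hp.one_lt]
  have ha3 : ¬ (3 : ℤ) ∣ a := by
    rintro ⟨a', rfl⟩
    have hd : (3 : ℤ) ∣ (p : ℤ) := by
      have h9 : (3 : ℤ) ∣ 4 * (p : ℤ) := ⟨3 * a' ^ 2 + 9 * b ^ 2, by linarith⟩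
      have h4 : ¬ ((3 : ℤ) ∣ 4) := by decide
      rcases Int.prime_three.dvd_mul.mp h9 with h | h
      · exact absurd h h4
      · exact h
    have hd' : (3 : ℕ) ∣ p := by exact_mod_cast hd
    exact hpne3 ((Nat.prime_dvd_prime_iff_eq Nat.prime_three hp).mp hd').symm
  have hb' : 0 < |b| := abs_pos.mpr hbne
  have hbsq : |b| ^ 2 = b ^ 2 := sq_abs b
  have hamod : a % 3 = 1 ∨ a % 3 = 2 := by omega
  rcases hamod with h | h
  · exact ⟨a, |b|, h, hb', by rw [hbsq]; exact hab⟩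
  · exact ⟨-a, |b|, by omega, hb', by rw [hbsq]; linear_combination hab⟩

/-- Uniqueness of the normalized representation. -/
lemma aux_rep_unique (p : ℕ) (hp : p.Prime) (a b c d : ℤ) (hb : 0 < b) (hd : 0 < d)
    (ha3 : a % 3 = 1) (hc3 : c % 3 = 1)
    (h₁ : 4 * (p : ℤ) = a ^ 2 + 27 * b ^ 2) (h₂ : 4 * (p : ℤ) = c ^ 2 + 27 * d ^ 2) :
    a = c := by
  have hp' : Prime (p : ℤ) := Int.prime_iff_natAbs_prime.mpr (by simpa using hp)
  have hppos : (0 : ℤ) < p := by exact_mod_cast hp.pos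
  have hkey : (p : ℤ) ∣ (a * d - b * c) * (a * d + b * c) :=
    ⟨4 * (d ^ 2 - b ^ 2), by linear_combination b ^ 2 * h₂ - d ^ 2 * h₁⟩
  have hbound : ∀ e : ℤ, (p : ℤ) ∣ e → e ≠ 0 → (p : ℤ) ^ 2 ≤ e ^ 2 := by
    intro e he hne
    have h1 : (p : ℤ) ≤ |e| := Int.le_of_dvd (abs_pos.mpr hne) ((dvd_abs _ _).mpr he)
    nlinarith [sq_abs e, abs_nonneg e]
  rcases hp'.dvd_mul.mp hkey with h | h
  · -- p ∣ ad - bc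
    have h0 : a * d - b * c = 0 := by
      by_contra hne
      have h1 := hbound _ h hne
      have hid : (a * c + 27 * b * d) ^ 2 + 27 * (a * d - b * c) ^ 2 = 16 * (p : ℤ) ^ 2 := by
        linear_combination (-c ^ 2 - 27 * d ^ 2) * h₁ + (-4 * (p : ℤ)) * h₂
      nlinarith [sq_nonneg (a * c + 27 * b * d)]
    have hXsq : (a * c + 27 * b * d) ^ 2 = 16 * (p : ℤ) ^ 2 := by
      linear_combination (-c ^ 2 - 27 * d ^ 2) * h₁ + (-4 * (p : ℤ)) * h₂ +
        (-27 * (a * d - b * c)) * h0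
    have hXd : (a * c + 27 * b * d) * d = 4 * (p : ℤ) * b := by
      linear_combination c * h0 - b * h₂
    have hfac : (a * c + 27 * b * d - 4 * (p:ℤ)) * (a * c + 27 * b * d + 4 * (p:ℤ)) = 0 := by
      linear_combination hXsq
    rcases mul_eq_zero.mp hfac with hX | hX
    · have hdb : 4 * (p : ℤ) * d = 4 * (p : ℤ) * b := by
        have : a * c + 27 * b * d = 4 * (p:ℤ) := by linarith
        rw [this] at hXd; exact hXd
      have hdb' : d = b := mul_left_cancel₀ (by positivity) hdb
      have : b * (a - c) = 0 := by rw [hdb'] at h0; linear_combination h0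
      rcases mul_eq_zero.mp this with h' | h'
      · exact absurd h' (by linarith)
      · linarith
    · exfalso
      have : a * c + 27 * b * d = -(4 * (p:ℤ)) := by linarith
      rw [this] at hXd
      have : d = -b := by
        have := mul_left_cancel₀ (show (4 * (p:ℤ)) ≠ 0 by positivity)
          (show 4 * (p:ℤ) * d = 4 * (p:ℤ) * (-b) by linarith)
        exact this
      linarith
  · -- p ∣ ad + bc
    have h0 : a * d + b * c = 0 := by
      by_contra hne
      have h1 := hbound _ h hne
      have hid : (a * c - 27 * b * d) ^ 2 + 27 * (a * d + b * c) ^ 2 = 16 * (p : ℤ) ^ 2 := by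
        linear_combination (-c ^ 2 - 27 * d ^ 2) * h₁ + (-4 * (p : ℤ)) * h₂
      nlinarith [sq_nonneg (a * c - 27 * b * d)]
    have hXsq : (a * c - 27 * b * d) ^ 2 = 16 * (p : ℤ) ^ 2 := by
      linear_combination (-c ^ 2 - 27 * d ^ 2) * h₁ + (-4 * (p : ℤ)) * h₂ +
        (-27 * (a * d + b * c)) * h0
    have hXd : (a * c - 27 * b * d) * d = -(4 * (p : ℤ) * b) := by
      linear_combination c * h0 + b * h₂
    have hfac : (a * c - 27 * b * d - 4 * (p:ℤ)) * (a * c - 27 * b * d + 4 * (p:ℤ)) = 0 := by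
      linear_combination hXsq
    have hac : a = -c := by
      rcases mul_eq_zero.mp hfac with hX | hX
      · exfalso
        have : a * c - 27 * b * d = 4 * (p:ℤ) := by linarith
        rw [this] at hXd
        have : d = -b := mul_left_cancel₀ (show (4 * (p:ℤ)) ≠ 0 by positivity)
          (show 4 * (p:ℤ) * d = 4 * (p:ℤ) * (-b) by linarith)
        linarith
      · have : a * c - 27 * b * d = -(4 * (p:ℤ)) := by linarith
        rw [this] at hXd
        have hdb' : d = b := mul_left_cancel₀
          (neg_ne_zero.mpr (show (4 * (p:ℤ)) ≠ 0 by positivity))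
          (show -(4 * (p:ℤ)) * d = -(4 * (p:ℤ)) * b by linarith)
        have : b * (a + c) = 0 := by rw [hdb'] at h0; linear_combination h0
        rcases mul_eq_zero.mp this with h' | h'
        · exact absurd h' (by linarith)
        · linarith
    omega

theorem four_p_eq_sq_add_27_sq (p : ℕ) (hp : p.Prime) (h3 : p % 3 = 1) :
    ∃! a : ℤ, a ≡ 1 [ZMOD 3] ∧
      ∃ b : ℤ, 0 < b ∧ 4 * (p : ℤ) = a ^ 2 + 27 * b ^ 2 := by
  obtain ⟨a, b, ha3, hb, hab⟩ := aux_exists_rep p hp h3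
  refine ⟨a, ⟨show a % 3 = 1 % 3 by omega, b, hb, hab⟩, ?_⟩
  rintro y ⟨hy3, d, hd, hyd⟩
  have hy3' : y % 3 = 1 % 3 := hy3
  exact aux_rep_unique p hp y d a b hd hb (by omega) ha3 hyd hab
end
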